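/- For any two permutations π and σ of a finite set V, the Kendall-Tau distance d_τ(π,σ) (the number of pairs ordered differently by π and σ) is at most the Spearman Footrule distance d_F(π,σ) (the sum over elements of the absolute difference of their ranks), which in turn is at most twice the Kendall-Tau distance. -/

import Mathlib

open Finset

/-- Kendall-Tau distance: number of (unordered) pairs ordered differently by π and σ,
counted via ordered pairs on which π increases and σ decreases. -/
def kendallTau {V : Type*} [Fintype V] [DecidableEq V] {n : ℕ} (π σ : V ≃ Fin n) : ℕ :=
  (Finset.univ.filter (fun p : V × V => π p.1 < π p.2 ∧ σ p.2 < σ p.1)).card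

/-- Spearman Footrule distance: sum of absolute rank differences. -/
def footrule {V : Type*} [Fintype V] {n : ℕ} (π σ : V ≃ Fin n) : ℕ :=
  ∑ u, ((π u : ℤ) - (σ u : ℤ)).natAbs

section Aux
variable {n : ℕ}



def KT (τ : Equiv.Perm (Fin n)) : ℕ :=
  (univ.filter (fun p : Fin n × Fin n => p.1 < p.2 ∧ τ p.2 < τ p.1)).card

def FR (τ : Equiv.Perm (Fin n)) : ℕ := ∑ i : Fin n, (((i:ℕ):ℤ) - ((τ i :ℕ):ℤ)).natAbs

-- reduction lemmas
lemma kendall_red {V : Type*} [Fintype V] [DecidableEq V] (π σ : V ≃ Fin n) :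
    (Finset.univ.filter (fun p : V × V => π p.1 < π p.2 ∧ σ p.2 < σ p.1)).card
      = KT (π.symm.trans σ) := by
  unfold KT
  apply Finset.card_bij (fun p _ => (π p.1, π p.2))
  · rintro ⟨u, v⟩ h
    simp only [mem_filter, mem_univ, true_and] at h ⊢
    simpa using h
  · rintro ⟨u, v⟩ _ ⟨u', v'⟩ _ h
    simp only [Prod.mk.injEq, EmbeddingLike.apply_eq_iff_eq] at h
    exact Prod.ext h.1 h.2
  · rintro ⟨i, j⟩ h
    refine ⟨(π.symm i, π.symm j), ?_, by simp⟩
    simp only [mem_filter, mem_univ, true_and] at h ⊢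
    simpa using h

lemma footrule_red {V : Type*} [Fintype V] (π σ : V ≃ Fin n) :
    ∑ u, ((π u : ℤ) - (σ u : ℤ)).natAbs = FR (π.symm.trans σ) := by
  unfold FR
  rw [← Equiv.sum_comp π.symm (fun u => ((π u : ℤ) - (σ u : ℤ)).natAbs)]
  simp



def aa (τ : Equiv.Perm (Fin n)) (i : Fin n) : ℕ :=
  (univ.filter (fun j => i < j ∧ τ j < τ i)).card
def bb (τ : Equiv.Perm (Fin n)) (i : Fin n) : ℕ :=
  (univ.filter (fun j => j < i ∧ τ i < τ j)).card

lemma rank_count (τ : Equiv.Perm (Fin n)) (i : Fin n) :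
    (τ i : ℕ) = (univ.filter (fun j => τ j < τ i)).card := by
  have h : univ.filter (fun j => τ j < τ i) = (Finset.Iio (τ i)).map τ.symm.toEmbedding := by
    ext j
    simp only [mem_filter, mem_univ, true_and, Finset.mem_map, Finset.mem_Iio,
      Equiv.coe_toEmbedding]
    constructor
    · exact fun h => ⟨τ j, h, τ.symm_apply_apply j⟩
    · rintro ⟨v, hv, rfl⟩; simpa using hv
  rw [h, Finset.card_map, Fin.card_Iio]

lemma pos_count (i : Fin n) : (i : ℕ) = (univ.filter (fun j => j < i)).card := by
  have h : univ.filter (fun j => j < i) = Finset.Iio i := by ext j; simp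
  rw [h, Fin.card_Iio]

lemma key_eq (τ : Equiv.Perm (Fin n)) (i : Fin n) :
    (τ i : ℕ) + bb τ i = (i : ℕ) + aa τ i := by
  have h1 : univ.filter (fun j => τ j < τ i)
      = (univ.filter (fun j => j < i ∧ τ j < τ i)) ∪ (univ.filter (fun j => i < j ∧ τ j < τ i)) := by
    ext j
    simp only [mem_filter, mem_univ, true_and, Finset.mem_union]
    constructor
    · intro h
      rcases lt_trichotomy j i with hc | hc | hc
      · exact Or.inl ⟨hc, h⟩
      · subst hc; exact absurd h (lt_irrefl _)
      · exact Or.inr ⟨hc, h⟩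
    · rintro (⟨_, h⟩ | ⟨_, h⟩) <;> exact h
  have h2 : univ.filter (fun j => j < i)
      = (univ.filter (fun j => j < i ∧ τ j < τ i)) ∪ (univ.filter (fun j => j < i ∧ τ i < τ j)) := by
    ext j
    simp only [mem_filter, mem_univ, true_and, Finset.mem_union]
    constructor
    · intro h
      rcases lt_trichotomy (τ j) (τ i) with hc | hc | hc
      · exact Or.inl ⟨h, hc⟩
      · exact absurd (τ.injective hc) (by rintro rfl; exact lt_irrefl _ h)
      · exact Or.inr ⟨h, hc⟩
    · rintro (⟨h, _⟩ | ⟨h, _⟩) <;> exact h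
  have d1 : Disjoint (univ.filter (fun j => j < i ∧ τ j < τ i))
      (univ.filter (fun j => i < j ∧ τ j < τ i)) := by
    rw [Finset.disjoint_filter]
    rintro j _ ⟨hj, _⟩ ⟨hj', _⟩
    exact absurd (hj.trans hj') (lt_irrefl _)
  have d2 : Disjoint (univ.filter (fun j => j < i ∧ τ j < τ i))
      (univ.filter (fun j => j < i ∧ τ i < τ j)) := by
    rw [Finset.disjoint_filter]
    rintro j _ ⟨_, hj⟩ ⟨_, hj'⟩
    exact absurd (hj.trans hj') (lt_irrefl _)
  rw [rank_count τ i, pos_count i, h1, h2, Finset.card_union_of_disjoint d1,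
    Finset.card_union_of_disjoint d2]
  unfold aa bb
  ring

lemma sum_aa (τ : Equiv.Perm (Fin n)) : ∑ i, aa τ i = KT τ := by
  unfold aa KT
  rw [Finset.card_filter, ← Finset.univ_product_univ, Finset.sum_product, Finset.sum_congr rfl]
  intro i _
  rw [Finset.card_filter]

lemma sum_bb (τ : Equiv.Perm (Fin n)) : ∑ i, bb τ i = KT τ := by
  unfold bb KT
  rw [Finset.card_filter, ← Finset.univ_product_univ, Finset.sum_product]
  rw [Finset.sum_comm]
  apply Finset.sum_congr rfl
  intro i _
  rw [Finset.card_filter]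

lemma FR_le (τ : Equiv.Perm (Fin n)) : FR τ ≤ 2 * KT τ := by
  unfold FR
  calc ∑ i : Fin n, (((i:ℕ):ℤ) - ((τ i :ℕ):ℤ)).natAbs
      ≤ ∑ i : Fin n, (aa τ i + bb τ i) := by
        apply Finset.sum_le_sum
        intro i _
        have h := key_eq τ i
        omega
    _ = 2 * KT τ := by rw [Finset.sum_add_distrib, sum_aa, sum_bb]; ring



-- degenerate case
lemma fix_of_le (τ : Equiv.Perm (Fin n)) (h : ∀ i, τ i ≤ i) : ∀ i, τ i = i := by
  have H : ∀ m : ℕ, ∀ i : Fin n, (i : ℕ) ≤ m → τ i = i := by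
    intro m
    induction m with
    | zero =>
      intro i hi
      have h1 := h i
      rw [Fin.le_def] at h1
      exact Fin.ext (by omega)
    | succ m IH =>
      intro i hi
      by_contra hne
      have hlt : τ i < i := lt_of_le_of_ne (h i) hne
      rw [Fin.lt_def] at hlt
      have h2 := IH (τ i) (by omega)
      exact hne (τ.injective h2)
  exact fun i => H n i (le_of_lt i.isLt)

lemma KT_eq_zero_of_le (τ : Equiv.Perm (Fin n)) (h : ∀ i, τ i ≤ i) : KT τ = 0 := by
  unfold KT
  rw [Finset.card_eq_zero, Finset.filter_eq_empty_iff]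
  rintro ⟨i, j⟩ _ ⟨h1, h2⟩
  rw [fix_of_le τ h i, fix_of_le τ h j] at h2
  exact absurd (h1.trans h2) (lt_irrefl _)

-- existence of a crossing pair
lemma exists_crossing (τ : Equiv.Perm (Fin n)) (hne : ∃ i, i < τ i) :
    ∃ p q : Fin n, p < q ∧ q ≤ τ p ∧ τ q ≤ p := by
  obtain ⟨p, hp, hpmax⟩ := Finset.exists_max_image (univ.filter (fun i => i < τ i))
    (fun i => (τ i : ℕ)) (by obtain ⟨i, hi⟩ := hne; exact ⟨i, by simp [hi]⟩)
  simp only [mem_filter, mem_univ, true_and] at hp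
  set a := τ p with ha
  have hpa : p < a := hp
  -- find q in Ioc p a with τ q ≤ p
  by_contra hcon
  push_neg at hcon
  have hmaps : ∀ m ∈ Finset.Ioc p a, τ m ∈ (Finset.Ioc p a).erase a := by
    intro m hm
    rw [Finset.mem_Ioc] at hm
    have hm1 : p < m := hm.1
    have hne2 : m ≠ p := ne_of_gt hm1
    have hτm_ne : τ m ≠ a := fun hh => hne2 (τ.injective (hh.trans ha))
    have hτm_le : τ m ≤ a := by
      by_cases hc : m < τ m
      · exact hpmax m (by simp [hc])
      · push_neg at hc; exact hc.trans hm.2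
    have hτm_gt : p < τ m := by
      by_contra hle
      push_neg at hle
      exact absurd (hcon p m hm1 hm.2) (by push_neg; exact hle)
    exact Finset.mem_erase.mpr ⟨hτm_ne, Finset.mem_Ioc.mpr ⟨hτm_gt, hτm_le⟩⟩
  have hinj : Set.InjOn τ (Finset.Ioc p a) := fun x _ y _ h => τ.injective h
  have hcard := Finset.card_le_card_of_injOn τ hmaps hinj
  rw [Finset.card_erase_of_mem (Finset.mem_Ioc.mpr ⟨hpa, le_refl a⟩)] at hcard
  have hpos : 0 < (Finset.Ioc p a).card :=
    Finset.card_pos.mpr ⟨a, Finset.mem_Ioc.mpr ⟨hpa, le_refl a⟩⟩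
  omega



section step
variable (τ : Equiv.Perm (Fin n)) (p q : Fin n)

lemma FR_step (hpq : p < q) (hqa : q ≤ τ p) (hbp : τ q ≤ p) :
    FR τ = FR (τ * Equiv.swap p q) + 2 * ((q:ℕ) - (p:ℕ)) := by
  set τ' := τ * Equiv.swap p q with hτ'
  have hne : p ≠ q := ne_of_lt hpq
  have hother : ∀ i : Fin n, i ≠ p → i ≠ q → τ' i = τ i := by
    intro i h1 h2
    simp [hτ', Equiv.swap_apply_of_ne_of_ne h1 h2]
  have hp' : τ' p = τ q := by simp [hτ']
  have hq' : τ' q = τ p := by simp [hτ']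
  unfold FR
  have split : ∀ g : Fin n → ℕ,
      ∑ i, g i = ∑ i ∈ (univ.erase p).erase q, g i + g q + g p := by
    intro g
    rw [Finset.sum_erase_add _ _ (Finset.mem_erase.mpr ⟨hne.symm, mem_univ q⟩),
      Finset.sum_erase_add _ _ (mem_univ p)]
  rw [split (fun i => (((i:ℕ):ℤ) - ((τ i :ℕ):ℤ)).natAbs),
    split (fun i => (((i:ℕ):ℤ) - ((τ' i :ℕ):ℤ)).natAbs)]
  have hsum : ∑ i ∈ (univ.erase p).erase q, (((i:ℕ):ℤ) - ((τ i :ℕ):ℤ)).natAbs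
      = ∑ i ∈ (univ.erase p).erase q, (((i:ℕ):ℤ) - ((τ' i :ℕ):ℤ)).natAbs := by
    apply Finset.sum_congr rfl
    intro i hi
    simp only [Finset.mem_erase] at hi
    rw [hother i hi.2.1 hi.1]
  rw [hsum, hp', hq']
  have h1 : (p:ℕ) < (q:ℕ) := hpq
  have h2 : (q:ℕ) ≤ ((τ p : Fin n) : ℕ) := hqa
  have h3 : ((τ q : Fin n) : ℕ) ≤ (p:ℕ) := hbp
  omega

lemma KT_step (hpq : p < q) (hqa : q ≤ τ p) (hbp : τ q ≤ p) :
    KT τ + 1 ≤ KT (τ * Equiv.swap p q) + 2 * ((q:ℕ) - (p:ℕ)) := by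
  set w := Equiv.swap p q with hw
  set P : Finset (Fin n × Fin n) :=
    univ.filter (fun x : Fin n × Fin n => x.1 < x.2 ∧ τ x.2 < τ x.1) with hP
  set P' : Finset (Fin n × Fin n) :=
    univ.filter (fun x : Fin n × Fin n => w x.1 < w x.2 ∧ τ x.2 < τ x.1) with hP'
  have hww : ∀ i : Fin n, w (w i) = i := by
    intro i; rw [hw]; exact Equiv.swap_apply_self p q i
  have hKT' : KT (τ * w) = P'.card := by
    unfold KT
    apply Finset.card_bij (fun x _ => (w x.1, w x.2))
    · rintro ⟨i, j⟩ h
      rw [Finset.mem_filter] at h ⊢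
      simp only [hP', mem_filter, mem_univ, true_and, Equiv.Perm.mul_apply] at h ⊢
      exact ⟨by rw [hww, hww]; exact h.1, h.2⟩
    · rintro ⟨i, j⟩ _ ⟨i', j'⟩ _ h
      simp only [Prod.mk.injEq, EmbeddingLike.apply_eq_iff_eq] at h
      exact Prod.ext h.1 h.2
    · rintro ⟨i, j⟩ h
      refine ⟨(w i, w j), ?_, by rw [hww, hww]⟩
      rw [Finset.mem_filter] at h ⊢
      simp only [hP', mem_filter, mem_univ, true_and, Equiv.Perm.mul_apply] at h ⊢
      exact ⟨h.1, by rw [hww, hww]; exact h.2⟩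
  set Flip : Finset (Fin n × Fin n) :=
    univ.filter (fun x : Fin n × Fin n => x.1 < x.2 ∧ w x.2 < w x.1) with hFlip
  have hsub : P \ P' ⊆ Flip := by
    rintro ⟨i, j⟩ h
    simp only [hP, hP', hFlip, Finset.mem_sdiff, mem_filter, mem_univ, true_and] at h ⊢
    obtain ⟨⟨hij, hτ⟩, hnot⟩ := h
    refine ⟨hij, ?_⟩
    rcases lt_trichotomy (w i) (w j) with hc | hc | hc
    · exact absurd ⟨hc, hτ⟩ hnot
    · exact absurd (w.injective hc) (ne_of_lt hij)
    · exact hc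
  have hwp : w p = q := by rw [hw]; exact Equiv.swap_apply_left p q
  have hwq : w q = p := by rw [hw]; exact Equiv.swap_apply_right p q
  have hwo : ∀ i : Fin n, i ≠ p → i ≠ q → w i = i := by
    intro i h1 h2; rw [hw]; exact Equiv.swap_apply_of_ne_of_ne h1 h2
  have hFlipcard : Flip.card = 2 * ((q:ℕ) - (p:ℕ)) - 1 := by
    have hEq : Flip = ({p} ×ˢ Finset.Ioc p q) ∪ (Finset.Ioo p q ×ˢ {q}) := by
      ext ⟨i, j⟩
      simp only [hFlip, mem_filter, mem_univ, true_and, Finset.mem_union,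
        Finset.mem_product, Finset.mem_singleton, Finset.mem_Ioc, Finset.mem_Ioo]
      constructor
      · rintro ⟨hij, hflip⟩
        rcases eq_or_ne i p with hip | hip
        · rcases eq_or_ne j q with hjq | hjq
          · exact Or.inl ⟨hip, hip ▸ hij, le_of_eq hjq⟩
          · have hjp : j ≠ p := by rw [hip] at hij; exact ne_of_gt hij
            rw [hip, hwp, hwo j hjp hjq] at hflip
            exact Or.inl ⟨hip, hip ▸ hij, le_of_lt hflip⟩
        · rcases eq_or_ne i q with hiq | hiq
          · exfalso
            have hjq : j ≠ q := by rw [hiq] at hij; exact ne_of_gt hij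
            have hjp : j ≠ p := by
              intro hjp
              rw [hiq, hjp] at hij
              exact absurd (hij.trans hpq) (lt_irrefl _)
            rw [hiq, hwq, hwo j hjp hjq] at hflip
            rw [hiq] at hij
            exact absurd ((hpq.trans hij).trans hflip) (lt_irrefl _)
          · rw [hwo i hip hiq] at hflip
            rcases eq_or_ne j q with hjq | hjq
            · rw [hjq, hwq] at hflip
              exact Or.inr ⟨⟨hflip, hjq ▸ hij⟩, hjq⟩
            · exfalso
              rcases eq_or_ne j p with hjp | hjp
              · rw [hjp, hwp] at hflip
                rw [hjp] at hij
                exact absurd ((hij.trans hpq).trans hflip) (lt_irrefl _)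
              · rw [hwo j hjp hjq] at hflip
                exact absurd (hij.trans hflip) (lt_irrefl _)
      · rintro (⟨hip, hj1, hj2⟩ | ⟨⟨hi1, hi2⟩, hjq⟩)
        · refine ⟨hip ▸ hj1, ?_⟩
          rw [hip, hwp]
          rcases eq_or_ne j q with hjq | hjq
          · rw [hjq, hwq]; exact hpq
          · rw [hwo j (ne_of_gt hj1) hjq]
            exact lt_of_le_of_ne hj2 hjq
        · refine ⟨hjq ▸ hi2, ?_⟩
          rw [hjq, hwq, hwo i (ne_of_gt hi1) (ne_of_lt hi2)]
          exact hi1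
    have hd : Disjoint ({p} ×ˢ Finset.Ioc p q) (Finset.Ioo p q ×ˢ ({q} : Finset (Fin n))) := by
      rw [Finset.disjoint_left]
      rintro ⟨i, j⟩ h1 h2
      simp only [Finset.mem_product, Finset.mem_singleton, Finset.mem_Ioo] at h1 h2
      rw [h1.1] at h2
      exact absurd h2.1.1 (lt_irrefl p)
    rw [hEq, Finset.card_union_of_disjoint hd, Finset.card_product, Finset.card_product,
      Finset.card_singleton, Finset.card_singleton, Fin.card_Ioc, Fin.card_Ioo]
    have : (p:ℕ) < (q:ℕ) := hpq
    omega
  have hdecomp : P.card = (P ∩ P').card + (P \ P').card :=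
    (Finset.card_inter_add_card_sdiff P P').symm
  have h1 : (P ∩ P').card ≤ P'.card := Finset.card_le_card Finset.inter_subset_right
  have h2 : (P \ P').card ≤ Flip.card := Finset.card_le_card hsub
  have hKT : KT τ = P.card := rfl
  have hq1 : (p:ℕ) < (q:ℕ) := hpq
  rw [hKT, hKT']
  omega

end step
-- main induction, appended to combined file for testing
lemma KT_le_FR_aux : ∀ N : ℕ, ∀ τ : Equiv.Perm (Fin n), FR τ ≤ N → KT τ ≤ FR τ := by
  intro N
  induction N with
  | zero =>
    intro τ hτ
    by_cases h : ∃ i, i < τ i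
    · obtain ⟨p, q, hpq, hqa, hbp⟩ := exists_crossing τ h
      have h1 := FR_step τ p q hpq hqa hbp
      have h2 : (p:ℕ) < (q:ℕ) := hpq
      omega
    · push_neg at h
      rw [KT_eq_zero_of_le τ h]
      exact Nat.zero_le _
  | succ N IH =>
    intro τ hτ
    by_cases h : ∃ i, i < τ i
    · obtain ⟨p, q, hpq, hqa, hbp⟩ := exists_crossing τ h
      have h1 := FR_step τ p q hpq hqa hbp
      have h2 := KT_step τ p q hpq hqa hbp
      have h3 : (p:ℕ) < (q:ℕ) := hpq
      have h4 : FR (τ * Equiv.swap p q) ≤ N := by omega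
      have h5 := IH (τ * Equiv.swap p q) h4
      omega
    · push_neg at h
      rw [KT_eq_zero_of_le τ h]
      exact Nat.zero_le _

lemma KT_le_FR (τ : Equiv.Perm (Fin n)) : KT τ ≤ FR τ := KT_le_FR_aux (FR τ) τ le_rfl

end Aux

theorem kendallTau_le_footrule_le_two_mul_kendallTau
    {V : Type*} [Fintype V] [DecidableEq V] {n : ℕ} (π σ : V ≃ Fin n) :
    kendallTau π σ ≤ footrule π σ ∧ footrule π σ ≤ 2 * kendallTau π σ := by
  have hk : kendallTau π σ = KT (π.symm.trans σ) := kendall_red π σ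
  have hf : footrule π σ = FR (π.symm.trans σ) := footrule_red π σ
  rw [hk, hf]
  exact ⟨KT_le_FR _, FR_le _⟩
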